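/- Let α ∈ (0,1) and let Y be an integrable real-valued random variable with a unique α-quantile. Let G₂ : ℝ → ℝ be strictly convex with subgradient G₂′ and let G₁ : ℝ → ℝ be such that for every 𝔞₂ ∈ ℝ the map x ↦ G₁(x) − (x/(1−α)) G₂′(𝔞₂) is strictly increasing, and assume E|G₁(Y)| < ∞ and E|G₂(Y)| < ∞. Define, for 𝔞₁ ≤ 𝔞₂, the scoring function S(𝔞₁, 𝔞₂, y) := (1{y ≤ 𝔞₁} − α)(G₁(𝔞₁) − G₁(y)) − G₂(𝔞₂) + G₂(y) + G₂′(𝔞₂)[ 𝔞₂ + (1/(1−α))( (1{y > 𝔞₁} − (1−α)) 𝔞₁ − 1{y > 𝔞₁} y ) ]. Then S is strictly consistent for the pair (VaR_α, CVaR_α): for every (𝔞₁, 𝔞₂) with 𝔞₁ ≤ 𝔞₂ and (𝔞₁, 𝔞₂) ≠ (VaR_α(Y), CVaR_α(Y)), one has E[S(VaR_α(Y), CVaR_α(Y), Y)] < E[S(𝔞₁, 𝔞₂, Y)]. -/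

import Mathlib

open MeasureTheory

open Set
open scoped ENNReal NNReal

/-- Value-at-risk at level `α` of the loss `X`: the `α`-quantile
`VaR_α(X) = inf {x : P(X ≤ x) ≥ α}`. -/
noncomputable def VaR {Ω : Type*} [MeasurableSpace Ω] (P : Measure Ω) (X : Ω → ℝ) (α : ℝ) : ℝ :=
  sInf {x : ℝ | α ≤ (P {ω | X ω ≤ x}).toReal}

/-- Conditional value-at-risk: `CVaR_α(X) = (1-α)⁻¹ ∫_α^1 VaR_u(X) du`. -/
noncomputable def CVaR {Ω : Type*} [MeasurableSpace Ω] (P : Measure Ω) (X : Ω → ℝ) (α : ℝ) : ℝ :=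
  (1 - α)⁻¹ * ∫ u in α..1, VaR P X u

/-- `q` is an `α`-quantile of `Y`: `P(Y < q) ≤ α ≤ P(Y ≤ q)`. -/
def IsQuantile {Ω : Type*} [MeasurableSpace Ω] (P : Measure Ω) (Y : Ω → ℝ) (α q : ℝ) : Prop :=
  (P {ω | Y ω < q}).toReal ≤ α ∧ α ≤ (P {ω | Y ω ≤ q}).toReal

lemma cvar_key {Ω : Type*} [MeasurableSpace Ω] (P : Measure Ω) [IsProbabilityMeasure P]
    {α : ℝ} (hα : α ∈ Set.Ioo (0:ℝ) 1) {Y : Ω → ℝ} (hYm : Measurable Y) (hY : Integrable Y P)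
    {q : ℝ} (hq : IsQuantile P Y α q) (huq : ∀ x, IsQuantile P Y α x → x = q) :
    VaR P Y α = q ∧ CVaR P Y α = q + (1 - α)⁻¹ * ∫ ω, max (Y ω - q) 0 ∂P := by
  set F : ℝ → ℝ := fun t => (P {ω | Y ω ≤ t}).toReal with hF
  have hFmono : Monotone F := by
    intro s t hst
    exact ENNReal.toReal_mono (measure_ne_top _ _)
      (measure_mono (fun ω (h : Y ω ≤ s) => le_trans h hst))
  have hFq : α ≤ F q := hq.2
  -- no point below q reaches level α
  have hbelow : ∀ x, x < q → F x < α := by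
    intro x hx
    by_contra hcon
    push_neg at hcon
    have h1 : F x ≤ (P {ω | Y ω < q}).toReal :=
      ENNReal.toReal_mono (measure_ne_top _ _)
        (measure_mono (fun ω (h : Y ω ≤ x) => lt_of_le_of_lt h hx))
    have h2 : F x = α := le_antisymm (h1.trans hq.1) hcon
    have h3 : IsQuantile P Y α x := by
      constructor
      · refine le_trans ?_ h2.le
        exact ENNReal.toReal_mono (measure_ne_top _ _)
          (measure_mono (fun ω (h : Y ω < x) => h.le))
      · exact hcon
    exact absurd (huq x h3) (ne_of_lt hx)
  have hVaR : VaR P Y α = q := by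
    apply le_antisymm
    · exact csInf_le ⟨q, fun x hx => by
        by_contra hxq; push_neg at hxq
        exact absurd hx (not_le.mpr (hbelow x hxq))⟩ hFq
    · refine le_csInf ⟨q, hFq⟩ (fun x hx => ?_)
      by_contra hxq; push_neg at hxq
      exact absurd hx (not_le.mpr (hbelow x hxq))
  -- existence of points with large F
  have hexists : ∀ u : ℝ, u < 1 → ∃ t : ℝ, u ≤ F t := by
    intro u hu
    have hun : (⋃ n : ℕ, {ω | Y ω ≤ (n:ℝ)}) = univ := by
      ext ω; simp only [mem_iUnion, mem_univ, iff_true, mem_setOf_eq]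
      exact exists_nat_ge (Y ω)
    have hmono : Monotone (fun n : ℕ => {ω | Y ω ≤ (n:ℝ)}) := by
      intro m n hmn ω (h : Y ω ≤ m)
      exact le_trans h (by exact_mod_cast hmn)
    have htend : Filter.Tendsto (fun n : ℕ => P {ω | Y ω ≤ (n:ℝ)}) Filter.atTop
        (nhds (P (⋃ n : ℕ, {ω | Y ω ≤ (n:ℝ)}))) := tendsto_measure_iUnion_atTop hmono
    rw [hun, measure_univ] at htend
    have htr : Filter.Tendsto (fun n : ℕ => F n) Filter.atTop (nhds 1) := by
      have := (ENNReal.tendsto_toReal (by simp)).comp htend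
      simp at this; exact this
    have := htr.eventually (eventually_ge_nhds hu)
    rcases this.exists with ⟨n, hn⟩
    exact ⟨n, hn⟩
  -- properties of VaR at levels u ∈ (α,1)
  set V : ℝ → ℝ := fun u => VaR P Y u with hV
  have hVbdd : ∀ u : ℝ, α < u → BddBelow {x | u ≤ F x} := by
    intro u hu
    refine ⟨q, fun x hx => ?_⟩
    by_contra hxq; push_neg at hxq
    exact absurd hx (not_le.mpr ((hbelow x hxq).trans hu))
  have hVne : ∀ u : ℝ, u < 1 → Set.Nonempty {x | u ≤ F x} := fun u hu => hexists u hu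
  have hVgeq : ∀ u : ℝ, α < u → u < 1 → q ≤ V u := by
    intro u hu1 hu2
    refine le_csInf (hVne u hu2) (fun x hx => ?_)
    by_contra hxq; push_neg at hxq
    exact absurd hx (not_le.mpr ((hbelow x hxq).trans hu1))
  have hVle : ∀ u t : ℝ, α < u → u ≤ F t → V u ≤ t := by
    intro u t hu ht
    exact csInf_le (hVbdd u hu) ht
  have hVlt : ∀ u t : ℝ, α < u → t < V u → F t < u := by
    intro u t hu ht
    by_contra hcon; push_neg at hcon
    exact absurd (hVle u t hu hcon) (not_le.mpr ht)
  have hVgt : ∀ u t : ℝ, u < 1 → F t < u → t ≤ V u := by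
    intro u t hu ht
    refine le_csInf (hVne u hu) (fun x hx => ?_)
    by_contra hxt; push_neg at hxt
    exact absurd (hFmono hxt.le) (not_le.mpr (lt_of_lt_of_le ht hx))
  -- the key slice measure identity
  have hslice : ∀ u ∈ Set.Ioo α 1, volume ({t : ℝ | F t < u} ∩ Ioi q)
      = ENNReal.ofReal (V u - q) := by
    intro u hu
    have h1 : Ioo q (V u) ⊆ {t : ℝ | F t < u} ∩ Ioi q := by
      intro t ht
      exact ⟨hVlt u t hu.1 ht.2, ht.1⟩
    have h2 : {t : ℝ | F t < u} ∩ Ioi q ⊆ Ioc q (V u) := by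
      intro t ht
      exact ⟨ht.2, hVgt u t hu.2 ht.1⟩
    refine le_antisymm ?_ ?_
    · calc volume ({t : ℝ | F t < u} ∩ Ioi q) ≤ volume (Ioc q (V u)) := measure_mono h2
        _ = ENNReal.ofReal (V u - q) := Real.volume_Ioc
    · calc ENNReal.ofReal (V u - q) = volume (Ioo q (V u)) := Real.volume_Ioo.symm
        _ ≤ volume ({t : ℝ | F t < u} ∩ Ioi q) := measure_mono h1
  have hFmeas : Measurable F := hFmono.measurable
  have hsetmeas : MeasurableSet {p : ℝ × ℝ | F p.2 < p.1} :=
    measurableSet_lt (hFmeas.comp measurable_snd) measurable_fst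
  have hchain1 : (∫⁻ u in Ioo α 1, ENNReal.ofReal (V u - q))
      = ∫⁻ t in Ioi q, ENNReal.ofReal (1 - F t) := by
    have h1 : (∫⁻ u in Ioo α 1, ENNReal.ofReal (V u - q))
        = ∫⁻ u in Ioo α 1, ∫⁻ t in Ioi q,
            ({p : ℝ × ℝ | F p.2 < p.1}.indicator (fun _ => (1:ℝ≥0∞)) (u, t)) := by
      refine setLIntegral_congr_fun measurableSet_Ioo (fun u hu => ?_)
      have heq : ∀ t : ℝ, ({p : ℝ × ℝ | F p.2 < p.1}.indicator (fun _ => (1:ℝ≥0∞)) (u, t))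
          = ({t : ℝ | F t < u}.indicator (fun _ => (1:ℝ≥0∞)) t) := by
        intro t
        simp only [Set.indicator_apply, Set.mem_setOf_eq]
      simp only [heq]
      rw [lintegral_indicator_const (measurableSet_lt hFmeas measurable_const) 1, one_mul,
        Measure.restrict_apply (measurableSet_lt hFmeas measurable_const), hslice u hu]
    have h2 : (∫⁻ u in Ioo α 1, ∫⁻ t in Ioi q,
          ({p : ℝ × ℝ | F p.2 < p.1}.indicator (fun _ => (1:ℝ≥0∞)) (u, t)))
        = ∫⁻ t in Ioi q, ∫⁻ u in Ioo α 1,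
            ({p : ℝ × ℝ | F p.2 < p.1}.indicator (fun _ => (1:ℝ≥0∞)) (u, t)) := by
      exact lintegral_lintegral_swap
        ((measurable_const.indicator hsetmeas).aemeasurable)
    have h3 : (∫⁻ t in Ioi q, ∫⁻ u in Ioo α 1,
          ({p : ℝ × ℝ | F p.2 < p.1}.indicator (fun _ => (1:ℝ≥0∞)) (u, t)))
        = ∫⁻ t in Ioi q, ENNReal.ofReal (1 - F t) := by
      refine setLIntegral_congr_fun measurableSet_Ioi (fun t ht => ?_)
      have hFt : α ≤ F t := hFq.trans (hFmono (le_of_lt ht))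
      have heq : ∀ u : ℝ, ({p : ℝ × ℝ | F p.2 < p.1}.indicator (fun _ => (1:ℝ≥0∞)) (u, t))
          = ({u : ℝ | F t < u}.indicator (fun _ => (1:ℝ≥0∞)) u) := by
        intro u
        simp only [Set.indicator_apply, Set.mem_setOf_eq]
      simp only [heq]
      rw [lintegral_indicator_const (s := {u : ℝ | F t < u}) measurableSet_Ioi 1, one_mul]
      have hrw : {u : ℝ | F t < u} = Ioi (F t) := rfl
      rw [hrw, Measure.restrict_apply measurableSet_Ioi]
      have hset : Ioi (F t) ∩ Ioo α 1 = Ioo (F t) 1 := by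
        ext u
        simp only [Set.mem_inter_iff, Set.mem_Ioi, Set.mem_Ioo]
        constructor
        · rintro ⟨h1, _, h3⟩; exact ⟨h1, h3⟩
        · rintro ⟨h1, h2⟩; exact ⟨h1, lt_of_le_of_lt hFt h1, h2⟩
      rw [hset, Real.volume_Ioo]
    rw [h1, h2, h3]
  have hMint : Integrable (fun ω => max (Y ω - q) 0) P := (hY.sub (integrable_const q)).pos_part
  have hchain2 : (∫⁻ t in Ioi q, ENNReal.ofReal (1 - F t))
      = ENNReal.ofReal (∫ ω, max (Y ω - q) 0 ∂P) := by
    have hsm2 : MeasurableSet {p : ℝ × Ω | p.1 < Y p.2} :=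
      measurableSet_lt measurable_fst (hYm.comp measurable_snd)
    have h0 : ∀ t : ℝ, ENNReal.ofReal (1 - F t) = P (Y ⁻¹' Ioi t) := by
      intro t
      have hc : Y ⁻¹' Ioi t = (Y ⁻¹' Iic t)ᶜ := by
        ext ω; simp [not_le]
      rw [hc, measure_compl (hYm measurableSet_Iic) (measure_ne_top _ _), measure_univ]
      have hle : P (Y ⁻¹' Iic t) ≤ 1 := prob_le_one
      have hFt : F t = (P (Y ⁻¹' Iic t)).toReal := rfl
      have h1' : (1 - P (Y ⁻¹' Iic t)).toReal = 1 - F t := by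
        rw [ENNReal.toReal_sub_of_le hle (by simp), hFt]
        simp
      rw [← h1', ENNReal.ofReal_toReal (by simp [ENNReal.sub_ne_top])]
    have h1 : (∫⁻ t in Ioi q, ENNReal.ofReal (1 - F t))
        = ∫⁻ t in Ioi q, ∫⁻ ω, ({p : ℝ × Ω | p.1 < Y p.2}.indicator (fun _ => (1:ℝ≥0∞)) (t, ω)) ∂P := by
      refine setLIntegral_congr_fun measurableSet_Ioi (fun t _ => ?_)
      have heq : ∀ ω : Ω, ({p : ℝ × Ω | p.1 < Y p.2}.indicator (fun _ => (1:ℝ≥0∞)) (t, ω))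
          = ((Y ⁻¹' Ioi t).indicator (fun _ => (1:ℝ≥0∞)) ω) := by
        intro ω
        by_cases h : t < Y ω <;> simp [Set.indicator_apply, Set.mem_preimage, h]
      simp only [heq]
      rw [lintegral_indicator_const (hYm measurableSet_Ioi) 1, one_mul, h0 t]
    have h2 : (∫⁻ t in Ioi q, ∫⁻ ω, ({p : ℝ × Ω | p.1 < Y p.2}.indicator (fun _ => (1:ℝ≥0∞)) (t, ω)) ∂P)
        = ∫⁻ ω, (∫⁻ t in Ioi q, ({p : ℝ × Ω | p.1 < Y p.2}.indicator (fun _ => (1:ℝ≥0∞)) (t, ω))) ∂P := by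
      exact lintegral_lintegral_swap ((measurable_const.indicator hsm2).aemeasurable)
    have h3 : (∫⁻ ω, (∫⁻ t in Ioi q, ({p : ℝ × Ω | p.1 < Y p.2}.indicator (fun _ => (1:ℝ≥0∞)) (t, ω))) ∂P)
        = ∫⁻ ω, ENNReal.ofReal (max (Y ω - q) 0) ∂P := by
      refine lintegral_congr (fun ω => ?_)
      have heq : ∀ t : ℝ, ({p : ℝ × Ω | p.1 < Y p.2}.indicator (fun _ => (1:ℝ≥0∞)) (t, ω))
          = ({t : ℝ | t < Y ω}.indicator (fun _ => (1:ℝ≥0∞)) t) := by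
        intro t; simp only [Set.indicator_apply, Set.mem_setOf_eq]
      simp only [heq]
      rw [lintegral_indicator_const (s := {t : ℝ | t < Y ω}) measurableSet_Iio 1, one_mul]
      have hrw : {t : ℝ | t < Y ω} = Iio (Y ω) := rfl
      rw [hrw, Measure.restrict_apply measurableSet_Iio]
      have hset : Iio (Y ω) ∩ Ioi q = Ioo q (Y ω) := by
        ext t; simp only [Set.mem_inter_iff, Set.mem_Iio, Set.mem_Ioi, Set.mem_Ioo]; tauto
      rw [hset, Real.volume_Ioo]
      rcases le_total (Y ω) q with h | h
      · rw [ENNReal.ofReal_of_nonpos (by linarith), max_eq_right (by linarith),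
          ENNReal.ofReal_zero]
      · rw [max_eq_left (by linarith)]
    have h4 : (∫⁻ ω, ENNReal.ofReal (max (Y ω - q) 0) ∂P)
        = ENNReal.ofReal (∫ ω, max (Y ω - q) 0 ∂P) :=
      (ofReal_integral_eq_lintegral_ofReal hMint (ae_of_all _ fun ω => le_max_right _ _)).symm
    rw [h1, h2, h3, h4]
  set M : ℝ := ∫ ω, max (Y ω - q) 0 ∂P with hM
  have hMnn : 0 ≤ M := integral_nonneg (fun ω => le_max_right _ _)
  have hkey : (∫⁻ u in Ioo α 1, ENNReal.ofReal (V u - q)) = ENNReal.ofReal M := by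
    rw [hchain1, hchain2]
  have hVmonoOn : MonotoneOn V (Ioo α 1) := by
    intro u hu v hv huv
    exact csInf_le_csInf (hVbdd u hu.1) (hVne v hv.2)
      (fun x hx => le_trans huv hx)
  have hVaem : AEMeasurable V (volume.restrict (Ioo α 1)) :=
    aemeasurable_restrict_of_monotoneOn measurableSet_Ioo hVmonoOn
  have hnnae : 0 ≤ᵐ[volume.restrict (Ioo α 1)] fun u => V u - q :=
    (ae_restrict_iff' measurableSet_Ioo).mpr
      (ae_of_all _ fun u hu => sub_nonneg.mpr (hVgeq u hu.1 hu.2))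
  have hint1 : IntegrableOn (fun u => V u - q) (Ioo α 1) volume := by
    refine ⟨(hVaem.sub aemeasurable_const).aestronglyMeasurable, ?_⟩
    rw [hasFiniteIntegral_iff_ofReal hnnae, hkey]
    exact ENNReal.ofReal_lt_top
  have hIoo : ∫ u in Ioo α 1, (V u - q) = M := by
    rw [integral_eq_lintegral_of_nonneg_ae hnnae
      (hVaem.sub aemeasurable_const).aestronglyMeasurable, hkey, ENNReal.toReal_ofReal hMnn]
  have hconst : IntegrableOn (fun _ : ℝ => q) (Ioo α 1) volume := by
    refine (integrableOn_const_iff (C := q)).mpr (Or.inr ?_)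
    rw [Real.volume_Ioo]; exact ENNReal.ofReal_lt_top
  have hVint : IntegrableOn V (Ioo α 1) volume := by
    exact Integrable.congr (hint1.add hconst) (ae_of_all _ fun u => by simp [Pi.add_apply])
  have hIooV : ∫ u in Ioo α 1, V u = M + (1 - α) * q := by
    have : ∫ u in Ioo α 1, V u = ∫ u in Ioo α 1, ((V u - q) + q) := by
      refine integral_congr_ae (ae_of_all _ fun u => by ring)
    rw [this, integral_add hint1 hconst, hIoo, setIntegral_const, Real.volume_real_Ioo,
      max_eq_left (by linarith [hα.2] : (0:ℝ) ≤ 1 - α), smul_eq_mul]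
  have hne1 : (1:ℝ) - α ≠ 0 := by
    have := hα.2; intro h; linarith
  refine ⟨hVaR, ?_⟩
  rw [CVaR, intervalIntegral.integral_of_le hα.2.le, integral_Ioc_eq_integral_Ioo]
  have hVV : ∀ u, VaR P Y u = V u := fun u => rfl
  simp only [hVV]
  rw [hIooV]
  field_simp
  ring

/-- The Fissler–Ziegel scoring function is strictly consistent for the pair
`(VaR_α, CVaR_α)`. -/
theorem var_cvar_score_strictly_consistent {Ω : Type*} [MeasurableSpace Ω] (P : Measure Ω)
    [IsProbabilityMeasure P] (α : ℝ) (hα : α ∈ Set.Ioo (0:ℝ) 1)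
    (Y : Ω → ℝ) (hYm : Measurable Y) (hY : Integrable Y P)
    (huniq : ∃! q : ℝ, IsQuantile P Y α q)
    (G₁ G₂ G₂' : ℝ → ℝ)
    -- G₂ is strictly convex with subgradient G₂'
    (hG₂ : ∀ x y : ℝ, G₂ x + G₂' x * (y - x) ≤ G₂ y)
    (hG₂strict : ∀ x y : ℝ, y ≠ x → G₂ x + G₂' x * (y - x) < G₂ y)
    -- for every 𝔞₂, the map x ↦ G₁(x) − (x/(1−α)) G₂'(𝔞₂) is strictly increasing
    (hG₁ : ∀ a₂ : ℝ, StrictMono (fun x => G₁ x - x / (1 - α) * G₂' a₂))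
    (hG₁Y : Integrable (fun ω => G₁ (Y ω)) P)
    (hG₂Y : Integrable (fun ω => G₂ (Y ω)) P)
    (S : ℝ → ℝ → ℝ → ℝ)
    (hS : ∀ a₁ a₂ y : ℝ, S a₁ a₂ y =
      ((if y ≤ a₁ then (1:ℝ) else 0) - α) * (G₁ a₁ - G₁ y) - G₂ a₂ + G₂ y
        + G₂' a₂ * (a₂ + (1 - α)⁻¹ *
            (((if a₁ < y then (1:ℝ) else 0) - (1 - α)) * a₁
              - (if a₁ < y then (1:ℝ) else 0) * y))) :
    ∀ a₁ a₂ : ℝ, a₁ ≤ a₂ → (a₁, a₂) ≠ (VaR P Y α, CVaR P Y α) →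
      ∫ ω, S (VaR P Y α) (CVaR P Y α) (Y ω) ∂P < ∫ ω, S a₁ a₂ (Y ω) ∂P := by
  intro a₁ a₂ ha12 hne
  obtain ⟨q, hq, huq⟩ := huniq
  have hkey := cvar_key P hα hYm hY hq huq
  have hne1 : (1:ℝ) - α ≠ 0 := by have := hα.2; intro h; linarith
  set M : ℝ := ∫ ω, max (Y ω - q) 0 ∂P with hM
  set c : ℝ := q + (1 - α)⁻¹ * M with hc
  rw [hkey.1, hkey.2] at hne ⊢
  -- basic measurability and integrability helpers
  have hPmono : ∀ {s t : Set Ω}, s ⊆ t → (P s).toReal ≤ (P t).toReal :=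
    fun h => ENNReal.toReal_mono (measure_ne_top _ _) (measure_mono h)
  have hmul : ∀ (s : ℝ) (g : Ω → ℝ), Integrable g P →
      Integrable (fun ω => (if Y ω ≤ s then (1:ℝ) else 0) * g ω) P := by
    intro s g hg
    refine Integrable.mono' hg.abs
      (((Measurable.ite (hYm measurableSet_Iic) measurable_const
        measurable_const).aestronglyMeasurable).mul hg.aestronglyMeasurable)
      (ae_of_all _ fun ω => ?_)
    by_cases h : Y ω ≤ s <;> simp [h, Real.norm_eq_abs, abs_nonneg, abs_mul]
  have hmul' : ∀ (g : Ω → ℝ), Integrable g P →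
      Integrable (fun ω => (if Y ω < q then (1:ℝ) else 0) * g ω) P := by
    intro g hg
    refine Integrable.mono' hg.abs
      (((Measurable.ite (hYm measurableSet_Iio) measurable_const
        measurable_const).aestronglyMeasurable).mul hg.aestronglyMeasurable)
      (ae_of_all _ fun ω => ?_)
    by_cases h : Y ω < q <;> simp [h, Real.norm_eq_abs, abs_nonneg, abs_mul]
  have hmulE : ∀ (s : ℝ) (g : Ω → ℝ), Integrable g P →
      Integrable (fun ω => (if s < Y ω then (1:ℝ) else 0) * g ω) P := by
    intro s g hg
    refine Integrable.mono' hg.abs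
      (((Measurable.ite (hYm measurableSet_Ioi) measurable_const
        measurable_const).aestronglyMeasurable).mul hg.aestronglyMeasurable)
      (ae_of_all _ fun ω => ?_)
    by_cases h : s < Y ω <;> simp [h, Real.norm_eq_abs, abs_nonneg, abs_mul]
  have hind : ∀ s : ℝ, Integrable (fun ω => (if Y ω ≤ s then (1:ℝ) else 0)) P := by
    intro s
    exact (hmul s (fun _ => 1) (integrable_const 1)).congr (ae_of_all _ fun ω => by simp)
  have hind' : Integrable (fun ω => (if Y ω < q then (1:ℝ) else 0)) P := by
    exact (hmul' (fun _ => 1) (integrable_const 1)).congr (ae_of_all _ fun ω => by simp)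
  have hindE : ∀ s : ℝ, Integrable (fun ω => (if s < Y ω then (1:ℝ) else 0)) P := by
    intro s
    exact (hmulE s (fun _ => 1) (integrable_const 1)).congr (ae_of_all _ fun ω => by simp)
  have hindval : ∀ s : ℝ, ∫ ω, (if Y ω ≤ s then (1:ℝ) else 0) ∂P
      = (P {ω | Y ω ≤ s}).toReal := by
    intro s
    have heq : ∫ ω, (if Y ω ≤ s then (1:ℝ) else 0) ∂P
        = ∫ ω, Set.indicator {ω | Y ω ≤ s} (fun _ => (1:ℝ)) ω ∂P :=
      integral_congr_ae (ae_of_all _ fun ω => by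
        by_cases h : Y ω ≤ s <;> simp [Set.indicator_apply, h])
    rw [heq, integral_indicator_const (1:ℝ) (show MeasurableSet {ω | Y ω ≤ s} from hYm measurableSet_Iic)]
    simp
    rfl
  have hindval' : ∫ ω, (if Y ω < q then (1:ℝ) else 0) ∂P
      = (P {ω | Y ω < q}).toReal := by
    have heq : ∫ ω, (if Y ω < q then (1:ℝ) else 0) ∂P
        = ∫ ω, Set.indicator {ω | Y ω < q} (fun _ => (1:ℝ)) ω ∂P :=
      integral_congr_ae (ae_of_all _ fun ω => by
        by_cases h : Y ω < q <;> simp [Set.indicator_apply, h])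
    rw [heq, integral_indicator_const (1:ℝ) (show MeasurableSet {ω | Y ω < q} from hYm measurableSet_Iio)]
    simp
    rfl
  -- the modified strictly increasing function
  set Gb : ℝ → ℝ := fun x => G₁ x - x / (1 - α) * G₂' a₂ with hGbdef
  have hGbsm : StrictMono Gb := hG₁ a₂
  have hGbY : Integrable (fun ω => Gb (Y ω)) P := by
    refine (hG₁Y.sub (hY.mul_const ((1 - α)⁻¹ * G₂' a₂))).congr (ae_of_all _ fun ω => ?_)
    simp only [hGbdef, Pi.sub_apply]
    ring
  -- generic blocks integrability
  have hblock : ∀ (s k : ℝ) (g : Ω → ℝ), Integrable g P →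
      Integrable (fun ω => ((if Y ω ≤ s then (1:ℝ) else 0) - α) * (k - g ω)) P := by
    intro s k g hg
    exact ((((hind s).sub (integrable_const α)).mul_const k |>.sub (hmul s g hg)).add
      (hg.const_mul α)).congr (ae_of_all _ fun ω => by
        simp only [Pi.sub_apply, Pi.add_apply]; ring)
  have hblock' : ∀ (k : ℝ) (g : Ω → ℝ), Integrable g P →
      Integrable (fun ω => ((if Y ω < q then (1:ℝ) else 0) - α) * (k - g ω)) P := by
    intro k g hg
    exact (((hind'.sub (integrable_const α)).mul_const k |>.sub (hmul' g hg)).add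
      (hg.const_mul α)).congr (ae_of_all _ fun ω => by
        simp only [Pi.sub_apply, Pi.add_apply]; ring)
  -- the K function and its expectation
  set K : Ω → ℝ := fun ω => (1 - α)⁻¹ * (((if q < Y ω then (1:ℝ) else 0) - (1 - α)) * q
      - (if q < Y ω then (1:ℝ) else 0) * Y ω) with hKdef
  have hMax : Integrable (fun ω => max (Y ω - q) 0) P := (hY.sub (integrable_const q)).pos_part
  have hKpt : ∀ ω, K ω = -q - (1 - α)⁻¹ * max (Y ω - q) 0 := by
    intro ω
    simp only [hKdef]
    by_cases h : q < Y ω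
    · rw [if_pos h, max_eq_left (by linarith)]
      field_simp
      ring
    · rw [if_neg h, max_eq_right (by push_neg at h; linarith)]
      field_simp
      ring
  have hKint : Integrable K P := by
    refine ((integrable_const (-q)).sub (hMax.const_mul (1 - α)⁻¹)).congr
      (ae_of_all _ fun ω => ?_)
    rw [hKpt ω]
    simp only [Pi.sub_apply]
  have hKval : ∫ ω, K ω ∂P = -c := by
    have h1 : ∫ ω, K ω ∂P = ∫ ω, (-q - (1 - α)⁻¹ * max (Y ω - q) 0) ∂P :=
      integral_congr_ae (ae_of_all _ fun ω => hKpt ω)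
    rw [h1, integral_sub (integrable_const (-q)) (hMax.const_mul (1 - α)⁻¹),
      integral_const, integral_const_mul, ← hM]
    simp only [probReal_univ, measure_univ, ENNReal.toReal_one, one_smul, hc]
    ring
  -- the two parts of the score difference
  set Db : Ω → ℝ := fun ω => ((if Y ω ≤ a₁ then (1:ℝ) else 0) - α) * (Gb a₁ - Gb (Y ω))
      - ((if Y ω ≤ q then (1:ℝ) else 0) - α) * (Gb q - Gb (Y ω)) with hDbdef
  set R : Ω → ℝ := fun ω => (G₂ c - G₂ a₂) + G₂' a₂ * a₂ - G₂' c * c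
      + (G₂' a₂ - G₂' c) * K ω with hRdef
  have hpt : ∀ ω, S a₁ a₂ (Y ω) - S q c (Y ω) = Db ω + R ω := by
    intro ω
    have hj1 : (if a₁ < Y ω then (1:ℝ) else 0) = 1 - (if Y ω ≤ a₁ then (1:ℝ) else 0) := by
      rcases le_or_gt (Y ω) a₁ with h | h
      · simp [h, not_lt.mpr h]
      · simp [h, not_le.mpr h]
    have hjq : (if q < Y ω then (1:ℝ) else 0) = 1 - (if Y ω ≤ q then (1:ℝ) else 0) := by
      rcases le_or_gt (Y ω) q with h | h
      · simp [h, not_lt.mpr h]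
      · simp [h, not_le.mpr h]
    simp only [hDbdef, hRdef, hKdef, hGbdef, hS, hj1, hjq]
    ring
  have hDbint : Integrable Db P := by
    refine ((hblock a₁ (Gb a₁) _ hGbY).sub (hblock q (Gb q) _ hGbY)).congr
      (ae_of_all _ fun ω => ?_)
    simp only [hDbdef, Pi.sub_apply]
  have hRint : Integrable R P := by
    refine ((integrable_const ((G₂ c - G₂ a₂) + G₂' a₂ * a₂ - G₂' c * c)).add
      (hKint.const_mul (G₂' a₂ - G₂' c))).congr (ae_of_all _ fun ω => ?_)
    simp only [hRdef, Pi.add_apply]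
  have hRval : ∫ ω, R ω ∂P = G₂ c - G₂ a₂ + G₂' a₂ * (a₂ - c) := by
    have h1 : ∫ ω, R ω ∂P = ((G₂ c - G₂ a₂) + G₂' a₂ * a₂ - G₂' c * c)
        + (G₂' a₂ - G₂' c) * ∫ ω, K ω ∂P := by
      simp only [hRdef]
      rw [integral_add (integrable_const _) (hKint.const_mul _), integral_const,
        integral_const_mul]
      simp
    rw [h1, hKval]
    ring
  have hSint : ∀ b₁ b₂ : ℝ, Integrable (fun ω => S b₁ b₂ (Y ω)) P := by
    intro b₁ b₂
    have hX : Integrable (fun ω => ((if b₁ < Y ω then (1:ℝ) else 0) - (1 - α)) * b₁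
        - (if b₁ < Y ω then (1:ℝ) else 0) * Y ω) P :=
      (((hindE b₁).sub (integrable_const (1 - α))).mul_const b₁).sub (hmulE b₁ Y hY)
    have hX2 : Integrable (fun ω => b₂ + (1 - α)⁻¹ * (((if b₁ < Y ω then (1:ℝ) else 0)
        - (1 - α)) * b₁ - (if b₁ < Y ω then (1:ℝ) else 0) * Y ω)) P :=
      (integrable_const b₂).add (hX.const_mul (1 - α)⁻¹)
    refine ((((hblock b₁ (G₁ b₁) _ hG₁Y).sub (integrable_const (G₂ b₂))).add hG₂Y).add
      (hX2.const_mul (G₂' b₂))).congr (ae_of_all _ fun ω => ?_)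
    simp only [hS, Pi.sub_apply, Pi.add_apply]
  have hdiff : (∫ ω, S a₁ a₂ (Y ω) ∂P) - ∫ ω, S q c (Y ω) ∂P
      = (∫ ω, Db ω ∂P) + ∫ ω, R ω ∂P := by
    rw [← integral_sub (hSint a₁ a₂) (hSint q c), ← integral_add hDbint hRint]
    exact integral_congr_ae (ae_of_all _ fun ω => hpt ω)
  -- sign analysis for the Db part
  have hDb : 0 ≤ (∫ ω, Db ω ∂P) ∧ (a₁ ≠ q → 0 < ∫ ω, Db ω ∂P) := by
    rcases lt_trichotomy a₁ q with hlt | heq | hgt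
    · -- a₁ < q
      set hm : Ω → ℝ := fun ω => ((if Y ω < q then (1:ℝ) else 0)
          - (if Y ω ≤ a₁ then (1:ℝ) else 0)) * (Gb (Y ω) - Gb a₁) with hmdef
      have hmint : Integrable hm P := by
        refine ((hblock a₁ (Gb a₁) _ hGbY).sub (hblock' (Gb a₁) _ hGbY)).congr
          (ae_of_all _ fun ω => ?_)
        simp only [hmdef, Pi.sub_apply]
        ring
      have hmnn : ∀ ω, 0 ≤ hm ω := by
        intro ω
        simp only [hmdef]
        by_cases h1 : Y ω ≤ a₁
        · rw [if_pos h1, if_pos (lt_of_le_of_lt h1 hlt)]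
          simp
        · rw [if_neg h1]
          by_cases h2 : Y ω < q
          · rw [if_pos h2]
            have := (hGbsm (not_le.mp h1)).le
            simp only [sub_zero, one_mul]
            linarith
          · rw [if_neg h2]
            simp
      have hpt3 : ∀ ω, Db ω = ((if Y ω < q then (1:ℝ) else 0) - α) * (Gb a₁ - Gb q)
          + hm ω := by
        intro ω
        by_cases hωq : Y ω = q
        · simp only [hDbdef, hmdef, hωq]
          rw [if_neg (not_le.mpr hlt), if_pos (le_refl q), if_neg (lt_irrefl q)]
          ring
        · have hiff : (if Y ω ≤ q then (1:ℝ) else 0) = (if Y ω < q then (1:ℝ) else 0) := by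
            by_cases h : Y ω < q
            · rw [if_pos h, if_pos h.le]
            · rw [if_neg h, if_neg (fun hh : Y ω ≤ q => h (lt_of_le_of_ne hh hωq))]
          simp only [hDbdef, hmdef, hiff]
          ring
      have hsplit : (∫ ω, Db ω ∂P) = ((P {ω | Y ω < q}).toReal - α) * (Gb a₁ - Gb q)
          + ∫ ω, hm ω ∂P := by
        have haux1 : Integrable (fun ω => ((if Y ω < q then (1:ℝ) else 0) - α)
            * (Gb a₁ - Gb q)) P :=
          ((hind'.sub (integrable_const α)).mul_const (Gb a₁ - Gb q)).congr
            (ae_of_all _ fun ω => by simp only [Pi.sub_apply])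
        rw [integral_congr_ae (ae_of_all _ hpt3),
          integral_add haux1 hmint,
          integral_mul_const, integral_sub hind' (integrable_const α), hindval',
          integral_const]
        simp
      have hfirst : 0 ≤ ((P {ω | Y ω < q}).toReal - α) * (Gb a₁ - Gb q) := by
        have h1 : (P {ω | Y ω < q}).toReal - α ≤ 0 := by have := hq.1; linarith
        have h2 : Gb a₁ - Gb q ≤ 0 := by have := hGbsm hlt; linarith
        nlinarith
      have hmnonneg : 0 ≤ ∫ ω, hm ω ∂P := integral_nonneg hmnn
      constructor
      · rw [hsplit]; linarith
      · intro _
        rcases lt_or_ge (P {ω | Y ω < q}).toReal α with hltα | hgeα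
        · have h1 : 0 < ((P {ω | Y ω < q}).toReal - α) * (Gb a₁ - Gb q) := by
            have h2 : Gb a₁ - Gb q < 0 := by have := hGbsm hlt; linarith
            nlinarith
          rw [hsplit]; linarith
        · have heqα : (P {ω | Y ω < q}).toReal = α := le_antisymm hq.1 hgeα
          have hnotq : ¬ IsQuantile P Y α a₁ := fun h => absurd (huq a₁ h) (ne_of_lt hlt)
          have hfirstok : (P {ω | Y ω < a₁}).toReal ≤ α := by
            rw [← heqα]
            exact hPmono (fun ω (h : Y ω < a₁) => lt_trans h hlt)
          have hsecondlt : (P {ω | Y ω ≤ a₁}).toReal < α := by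
            by_contra hcon; push_neg at hcon
            exact hnotq ⟨hfirstok, hcon⟩
          have hsub2 : {ω | Y ω ≤ a₁} ⊆ {ω | Y ω < q} :=
            fun ω (h : Y ω ≤ a₁) => lt_of_le_of_lt h hlt
          have hpos : 0 < P ({ω | Y ω < q} \ {ω | Y ω ≤ a₁}) := by
            rw [measure_diff hsub2 (hYm measurableSet_Iic).nullMeasurableSet
              (measure_ne_top _ _)]
            refine tsub_pos_iff_lt.mpr ?_
            refine (ENNReal.toReal_lt_toReal (measure_ne_top _ _) (measure_ne_top _ _)).mp ?_
            rw [heqα]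
            exact hsecondlt
          have hmpos : 0 < ∫ ω, hm ω ∂P := by
            refine (integral_pos_iff_support_of_nonneg (fun ω => hmnn ω) hmint).mpr ?_
            refine lt_of_lt_of_le hpos (measure_mono ?_)
            rintro ω ⟨h1, h2⟩
            have h1' : Y ω < q := h1
            have h2' : ¬ Y ω ≤ a₁ := h2
            have h3 : a₁ < Y ω := not_le.mp h2'
            simp only [Function.mem_support, hmdef]
            rw [if_pos h1', if_neg h2']
            have := hGbsm h3
            intro hcon
            simp only [sub_zero, one_mul] at hcon
            linarith [sub_eq_zero.mp hcon]
          rw [hsplit]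
          linarith
    · -- a₁ = q
      have hzero : ∀ ω, Db ω = 0 := by
        intro ω
        simp only [hDbdef, heq]
        ring
      rw [integral_congr_ae (ae_of_all _ hzero), integral_zero]
      exact ⟨le_refl 0, fun h => absurd heq h⟩
    · -- q < a₁
      set hp : Ω → ℝ := fun ω => ((if Y ω ≤ a₁ then (1:ℝ) else 0)
          - (if Y ω ≤ q then (1:ℝ) else 0)) * (Gb a₁ - Gb (Y ω)) with hpdef
      have hpint : Integrable hp P := by
        refine ((hblock a₁ (Gb a₁) _ hGbY).sub (hblock q (Gb a₁) _ hGbY)).congr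
          (ae_of_all _ fun ω => ?_)
        simp only [hpdef, Pi.sub_apply]
        ring
      have hpnn : ∀ ω, 0 ≤ hp ω := by
        intro ω
        simp only [hpdef]
        by_cases h1 : Y ω ≤ a₁
        · rw [if_pos h1]
          by_cases h2 : Y ω ≤ q
          · rw [if_pos h2]; simp
          · rw [if_neg h2]
            have := (hGbsm.monotone h1)
            simp only [sub_zero, one_mul]
            linarith
        · rw [if_neg h1, if_neg (fun hh : Y ω ≤ q => h1 (le_trans hh hgt.le))]
          simp
      have hpt2 : ∀ ω, Db ω = ((if Y ω ≤ q then (1:ℝ) else 0) - α) * (Gb a₁ - Gb q)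
          + hp ω := by
        intro ω
        simp only [hDbdef, hpdef]
        ring
      have hsplit : (∫ ω, Db ω ∂P) = ((P {ω | Y ω ≤ q}).toReal - α) * (Gb a₁ - Gb q)
          + ∫ ω, hp ω ∂P := by
        have haux1 : Integrable (fun ω => ((if Y ω ≤ q then (1:ℝ) else 0) - α)
            * (Gb a₁ - Gb q)) P :=
          (((hind q).sub (integrable_const α)).mul_const (Gb a₁ - Gb q)).congr
            (ae_of_all _ fun ω => by simp only [Pi.sub_apply])
        rw [integral_congr_ae (ae_of_all _ hpt2),
          integral_add haux1 hpint,
          integral_mul_const, integral_sub (hind q) (integrable_const α), hindval,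
          integral_const]
        simp
      have hfirst : 0 ≤ ((P {ω | Y ω ≤ q}).toReal - α) * (Gb a₁ - Gb q) := by
        have h1 : 0 ≤ (P {ω | Y ω ≤ q}).toReal - α := by have := hq.2; linarith
        have h2 : 0 ≤ Gb a₁ - Gb q := by have := hGbsm hgt; linarith
        nlinarith
      have hpnonneg : 0 ≤ ∫ ω, hp ω ∂P := integral_nonneg hpnn
      constructor
      · rw [hsplit]; linarith
      · intro _
        rcases lt_or_ge α (P {ω | Y ω ≤ q}).toReal with hltα | hgeα
        · have h1 : 0 < ((P {ω | Y ω ≤ q}).toReal - α) * (Gb a₁ - Gb q) := by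
            have h2 : 0 < Gb a₁ - Gb q := by have := hGbsm hgt; linarith
            nlinarith
          rw [hsplit]; linarith
        · have heqα : (P {ω | Y ω ≤ q}).toReal = α := le_antisymm hgeα hq.2
          have hnotq : ¬ IsQuantile P Y α a₁ := fun h => absurd (huq a₁ h) (ne_of_gt hgt)
          have hsecondok : α ≤ (P {ω | Y ω ≤ a₁}).toReal :=
            le_trans hq.2 (hPmono (fun ω (h : Y ω ≤ q) => le_trans h hgt.le))
          have hfirstgt : α < (P {ω | Y ω < a₁}).toReal := by
            by_contra hcon; push_neg at hcon
            exact hnotq ⟨hcon, hsecondok⟩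
          have hsub2 : {ω | Y ω ≤ q} ⊆ {ω | Y ω < a₁} :=
            fun ω (h : Y ω ≤ q) => lt_of_le_of_lt h hgt
          have hpos : 0 < P ({ω | Y ω < a₁} \ {ω | Y ω ≤ q}) := by
            rw [measure_diff hsub2 (hYm measurableSet_Iic).nullMeasurableSet
              (measure_ne_top _ _)]
            refine tsub_pos_iff_lt.mpr ?_
            refine (ENNReal.toReal_lt_toReal (measure_ne_top _ _) (measure_ne_top _ _)).mp ?_
            rw [heqα]
            exact hfirstgt
          have hppos : 0 < ∫ ω, hp ω ∂P := by
            refine (integral_pos_iff_support_of_nonneg (fun ω => hpnn ω) hpint).mpr ?_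
            refine lt_of_lt_of_le hpos (measure_mono ?_)
            rintro ω ⟨h1, h2⟩
            have h1' : Y ω < a₁ := h1
            have h2' : ¬ Y ω ≤ q := h2
            simp only [Function.mem_support, hpdef]
            rw [if_pos (le_of_lt h1'), if_neg h2']
            have := hGbsm h1'
            intro hcon
            simp only [sub_zero, one_mul] at hcon
            linarith [sub_eq_zero.mp hcon]
          rw [hsplit]
          linarith
  -- conclusion
  have hRnn : 0 ≤ ∫ ω, R ω ∂P := by
    rw [hRval]
    have := hG₂ a₂ c
    linarith
  have hprod : a₁ ≠ q ∨ a₂ ≠ c := by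
    by_contra h
    push_neg at h
    exact hne (by rw [h.1, h.2])
  rcases hprod with h | h
  · have := hDb.2 h
    linarith [hRnn, hdiff, this]
  · have hRpos : 0 < ∫ ω, R ω ∂P := by
      rw [hRval]
      have := hG₂strict a₂ c (fun hcon => h hcon.symm)
      linarith
    linarith [hDb.1, hdiff, hRpos]
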